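/- The power allocation problem: maximize t subject to t ≤ eₘ·√(Pₘ) for m = 1,…,M (with eₘ > 0 fixed) and ∑ₘ Pₘ ≤ P·M, Pₘ ≥ 0, has optimal value t* = √(P·M) / √(∑ₘ 1/eₘ²), attained at Pₘ = (t*/eₘ)². -/
import Mathlib


theorem power_allocation_optimal (M : ℕ) (hM : 0 < M) (e : Fin M → ℝ) (he : ∀ m, 0 < e m)
    (P : ℝ) (hP : 0 < P) :
    IsGreatest
        {t : ℝ | ∃ Pv : Fin M → ℝ, (∀ m, 0 ≤ Pv m) ∧
          (∀ m, t ≤ e m * Real.sqrt (Pv m)) ∧ (∑ m, Pv m) ≤ P * M}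
        (Real.sqrt (P * M) / Real.sqrt (∑ m, 1 / (e m) ^ 2)) ∧
    (∀ m, 0 ≤ (Real.sqrt (P * M) / Real.sqrt (∑ m, 1 / (e m) ^ 2) / e m) ^ 2) ∧
    (∀ m, Real.sqrt (P * M) / Real.sqrt (∑ m, 1 / (e m) ^ 2) ≤
        e m * Real.sqrt ((Real.sqrt (P * M) / Real.sqrt (∑ m, 1 / (e m) ^ 2) / e m) ^ 2)) ∧
    (∑ m, (Real.sqrt (P * M) / Real.sqrt (∑ m, 1 / (e m) ^ 2) / e m) ^ 2) ≤ P * M := by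
  set S : ℝ := ∑ m, 1 / (e m) ^ 2 with hSdef
  have hSpos : 0 < S := by
    apply Finset.sum_pos
    · intro m _
      have := he m
      positivity
    · exact Finset.univ_nonempty_iff.mpr ⟨⟨0, hM⟩⟩
  have hPM : 0 < P * M := by positivity
  set t : ℝ := Real.sqrt (P * M) / Real.sqrt S with htdef
  have ht0 : 0 ≤ t := div_nonneg (Real.sqrt_nonneg _) (Real.sqrt_nonneg _)
  have htsq : t ^ 2 = P * M / S := by
    rw [htdef, div_pow, Real.sq_sqrt hPM.le, Real.sq_sqrt hSpos.le]
  have hfeas2 : ∀ m, t ≤ e m * Real.sqrt ((t / e m) ^ 2) := by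
    intro m
    rw [Real.sqrt_sq (div_nonneg ht0 (he m).le)]
    rw [mul_div_cancel₀ _ (he m).ne']
  have hfeas3 : (∑ m, (t / e m) ^ 2) ≤ P * M := by
    have : (∑ m, (t / e m) ^ 2) = t ^ 2 * S := by
      rw [Finset.mul_sum]
      congr 1; ext m; field_simp
    rw [this, htsq, div_mul_cancel₀ _ hSpos.ne']
  refine ⟨⟨⟨fun m => (t / e m) ^ 2, fun m => by positivity, hfeas2, hfeas3⟩, ?_⟩,
    fun m => by positivity, hfeas2, hfeas3⟩
  rintro x ⟨Pv, hPv0, hPvle, hPvsum⟩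
  rcases le_or_gt x 0 with hx | hx
  · exact hx.trans ht0
  · have key : x ^ 2 * S ≤ P * M := by
      calc x ^ 2 * S = ∑ m, x ^ 2 * (1 / e m ^ 2) := by rw [← Finset.mul_sum]
        _ ≤ ∑ m, Pv m := by
            apply Finset.sum_le_sum
            intro m _
            have h1 : x ≤ e m * Real.sqrt (Pv m) := hPvle m
            have h2 : x ^ 2 ≤ (e m * Real.sqrt (Pv m)) ^ 2 :=
              pow_le_pow_left₀ hx.le h1 2
            have h3 : (e m * Real.sqrt (Pv m)) ^ 2 = e m ^ 2 * Pv m := by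
              rw [mul_pow, Real.sq_sqrt (hPv0 m)]
            have hem := he m
            rw [h3] at h2
            rw [mul_one_div]
            rw [div_le_iff₀ (by positivity)]
            linarith
        _ ≤ P * M := hPvsum
    have hx2 : x ^ 2 ≤ t ^ 2 := by
      rw [htsq, le_div_iff₀ hSpos]; exact key
    nlinarith [hx2, hx, ht0]
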